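/- The Chebyshev expansion coefficients of the Zernike polynomials satisfy the sum rule Σ'_{i=0, n-i even}^{n} c_{n,m,i} = 1, where the prime means the i=0 term is halved; here c_{n,m,i} is given explicitly by c_{n,m,i} = (-1)^{(n-m)/2} Σ_{s=max(0,(i-m)/2)}^{(n-m)/2} (-1)^s C((n+m)/2+s, (n-m)/2-s) C(m+2s,s) 2^{1-m-2s} C(m+2s, (m+2s-i)/2). -/

import Mathlib

open Finset

lemma sum_if_even (F : ℕ → ℝ) (n : ℕ) :
    ∑ j ∈ range n, (if j % 2 = 0 then F (j / 2) else 0) = ∑ a ∈ range ((n + 1) / 2), F a := by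
  rw [← Finset.sum_filter]
  have himg : filter (fun j => j % 2 = 0) (range n) = image (fun a => 2 * a) (range ((n+1)/2)) := by
    ext j
    simp only [mem_filter, mem_range, mem_image]
    constructor
    · rintro ⟨hj, he⟩; exact ⟨j / 2, by omega, by omega⟩
    · rintro ⟨a, ha, rfl⟩; omega
  rw [himg, Finset.sum_image (by intro a _ b _ hab; simp only at hab; omega)]
  apply Finset.sum_congr rfl
  intro a _
  congr 1
  omega

lemma two_mul_sum_choose_even (h : ℕ) :
    2 * ∑ i ∈ range (h + 1), (2 * h).choose i = 4 ^ h + (2 * h).choose h := by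
  have A : ∑ i ∈ range (2 * h + 1), (2 * h).choose i = 4 ^ h := by
    rw [Nat.sum_range_choose]
    rw [show (4:ℕ) = 2^2 by norm_num, ← pow_mul]
    
  have B : ∑ i ∈ range (h + 1), (2*h).choose i + ∑ i ∈ Ico (h+1) (2*h+1), (2*h).choose i
      = ∑ i ∈ range (2*h+1), (2*h).choose i := by
    simp only [range_eq_Ico]
    exact Finset.sum_Ico_consecutive _ (by omega) (by omega)
  have C : ∑ i ∈ Ico (h+1) (2*h+1), (2*h).choose i = ∑ i ∈ range h, (2*h).choose i := by
    rw [Finset.sum_Ico_eq_sum_range]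
    have : ∀ i ∈ range (2*h+1-(h+1)), (2*h).choose (h+1+i) = (fun j => (2*h).choose j) (h - 1 - i) := by
      intro i hi
      simp only [mem_range] at hi
      have : h + 1 + i ≤ 2 * h := by omega
      rw [← Nat.choose_symm this]
      congr 1
      omega
    rw [Finset.sum_congr rfl this, show 2*h+1-(h+1) = h by omega, Finset.sum_range_reflect]
  have D : ∑ i ∈ range (h+1), (2*h).choose i = ∑ i ∈ range h, (2*h).choose i + (2*h).choose h :=
    Finset.sum_range_succ _ h
  omega

lemma J_lemma (M : ℕ) :
    ∑ i ∈ range (M + 1),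
      (if (M - i) % 2 = 0 then (if i = 0 then (1 : ℝ) / 2 else 1) * (M.choose ((M - i) / 2) : ℝ)
       else 0) = 2 ^ M / 2 := by
  have refl : ∑ i ∈ range (M + 1),
      (if (M - i) % 2 = 0 then (if i = 0 then (1 : ℝ) / 2 else 1) * (M.choose ((M - i) / 2) : ℝ)
       else 0)
      = ∑ j ∈ range (M + 1),
      (if j % 2 = 0 then (if j = M then (1 : ℝ) / 2 else 1) * (M.choose (j / 2) : ℝ) else 0) := by
    rw [← Finset.sum_range_reflect (fun i =>
      (if (M - i) % 2 = 0 then (if i = 0 then (1 : ℝ) / 2 else 1) * (M.choose ((M - i) / 2) : ℝ)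
       else 0)) (M + 1)]
    apply Finset.sum_congr rfl
    intro j hj
    simp only [mem_range] at hj
    have h1 : M + 1 - 1 - j = M - j := by omega
    have h2 : M - (M - j) = j := by omega
    have h4 : (M - j = 0) ↔ (j = M) := by omega
    rw [h1, h2]
    by_cases hp : j % 2 = 0 <;> simp [hp, h4]
  rw [refl]
  rcases Nat.even_or_odd M with ⟨h, rfl⟩ | ⟨h, rfl⟩
  · -- M = 2h (note: Even gives h + h)
    have congr1 : ∀ j ∈ range (h + h + 1),
        (if j % 2 = 0 then (if j = h + h then (1 : ℝ) / 2 else 1) * ((h+h).choose (j / 2) : ℝ) else 0)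
        = (if j % 2 = 0 then (fun a => (if a = h then (1 : ℝ) / 2 else 1) * ((h+h).choose a : ℝ)) (j / 2) else 0) := by
      intro j hj
      by_cases hp : j % 2 = 0
      · have : (j = h + h) ↔ (j / 2 = h) := by omega
        simp [hp, this]
      · simp [hp]
    rw [Finset.sum_congr rfl congr1, sum_if_even (fun a => (if a = h then (1 : ℝ) / 2 else 1) * ((h+h).choose a : ℝ)) (h+h+1), show (h + h + 1 + 1) / 2 = h + 1 by omega]
    have split : ∀ a : ℕ, (if a = h then (1 : ℝ) / 2 else 1) * ((h+h).choose a : ℝ)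
        = ((h+h).choose a : ℝ) - (if a = h then ((h+h).choose h : ℝ) / 2 else 0) := by
      intro a; by_cases ha : a = h <;> simp [ha] <;> ring
    simp only [split]
    rw [Finset.sum_sub_distrib, Finset.sum_ite_eq' (range (h+1)) h]
    simp only [mem_range, lt_add_iff_pos_right, Nat.lt_irrefl, if_pos (by omega : h < h + 1)]
    have key := two_mul_sum_choose_even h
    have keyR : (2 : ℝ) * ∑ i ∈ range (h + 1), ((2 * h).choose i : ℝ)
        = 4 ^ h + ((2 * h).choose h : ℝ) := by exact_mod_cast key
    have h2h : 2 * h = h + h := by omega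
    rw [h2h] at keyR
    have : (4 : ℝ) ^ h = 2 ^ (h + h) := by
      rw [show (4:ℝ) = 2^2 by norm_num, ← pow_mul]; ring_nf
    rw [this] at keyR
    norm_num
    linarith
  · -- M = 2h+1
    have congr1 : ∀ j ∈ range (2*h + 1 + 1),
        (if j % 2 = 0 then (if j = 2*h+1 then (1 : ℝ) / 2 else 1) * ((2*h+1).choose (j / 2) : ℝ) else 0)
        = (if j % 2 = 0 then (fun a => ((2*h+1).choose a : ℝ)) (j / 2) else 0) := by
      intro j hj
      by_cases hp : j % 2 = 0
      · have : ¬ (j = 2*h+1) := by omega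
        simp [hp, this]
      · simp [hp]
    rw [Finset.sum_congr rfl congr1, sum_if_even (fun a => ((2*h+1).choose a : ℝ)) (2*h+1+1), show (2*h + 1 + 1 + 1) / 2 = h + 1 by omega]
    have key := Nat.sum_range_choose_halfway h
    have keyR : ∑ i ∈ range (h + 1), ((2 * h + 1).choose i : ℝ) = 4 ^ h := by exact_mod_cast key
    rw [keyR, show (4:ℝ) = 2^2 by norm_num, ← pow_mul]
    rw [show (2:ℝ)^(2*h+1) = 2^(2*h) * 2 by ring]
    ring

noncomputable def S (N k : ℕ) : ℝ :=
  ∑ t ∈ range (k + 1), (-1 : ℝ) ^ t * ((N - t).choose t : ℝ) * ((N - 2 * t).choose (k - t) : ℝ)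

lemma S_k0 (N : ℕ) : S N 0 = 1 := by simp [S]

lemma S_N0 (k : ℕ) : S 0 k = if k = 0 then 1 else 0 := by
  rcases k with _ | j
  · simp [S]
  · rw [if_neg (by omega)]
    apply Finset.sum_eq_zero
    intro t ht
    rcases t with _ | u
    · simp
    · have : (0 - (u+1) : ℕ) = 0 := by omega
      rw [this]
      simp [Nat.choose_eq_zero_of_lt (by omega : 0 < u + 1)]

lemma S_N1 (k : ℕ) : S 1 k = if k ≤ 1 then 1 else 0 := by
  rcases k with _ | _ | j
  · simp [S]
  · rw [if_pos (by omega)]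
    simp [S, Finset.sum_range_succ]
  · rw [if_neg (by omega)]
    apply Finset.sum_eq_zero
    intro t ht
    rcases t with _ | u
    · simp [Nat.choose_eq_zero_of_lt (by omega : 1 < j + 2)]
    · have : (1 - (u+1) : ℕ) = 0 := by omega
      rw [this]
      simp [Nat.choose_eq_zero_of_lt (by omega : 0 < u + 1)]

lemma pascal1 (M u : ℕ) :
    (M + 1 - u).choose (u + 1) = (M - u).choose (u + 1) + (M - u).choose u := by
  rcases le_or_gt u M with h | h
  · rw [show M + 1 - u = (M - u) + 1 by omega, Nat.choose_succ_succ']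
    omega
  · rw [show M + 1 - u = 0 by omega, show M - u = 0 by omega]
    simp [Nat.choose_eq_zero_of_lt (by omega : 0 < u + 1),
      Nat.choose_eq_zero_of_lt (by omega : 0 < u)]

lemma pascal2 (M t j : ℕ) (htj : t ≤ j) :
    ((M + 1 - t).choose t : ℝ) * ((M + 2 - 2 * t).choose (j + 1 - t) : ℝ)
      = ((M + 1 - t).choose t : ℝ) *
        (((M + 1 - 2 * t).choose (j + 1 - t) : ℝ) + ((M + 1 - 2 * t).choose (j - t) : ℝ)) := by
  rcases le_or_gt (2 * t) (M + 1) with h | h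
  · congr 1
    rw [show M + 2 - 2 * t = (M + 1 - 2 * t) + 1 by omega,
        show j + 1 - t = (j - t) + 1 by omega, Nat.choose_succ_succ']
    push_cast
    ring
  · rw [Nat.choose_eq_zero_of_lt (show M + 1 - t < t by omega)]
    simp

lemma S_rec (M j : ℕ) : S (M + 2) (j + 1) = S (M + 1) (j + 1) + S (M + 1) j - S M j := by
  have step1 : S (M + 2) (j + 1)
      = (∑ t ∈ range (j + 2), (-1 : ℝ) ^ t * ((M + 1 - t).choose t : ℝ)
          * ((M + 2 - 2 * t).choose (j + 1 - t) : ℝ)) - S M j := by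
    rw [eq_sub_iff_add_eq]
    have key : ∑ t ∈ range (j + 2),
        ((-1 : ℝ) ^ t * ((M + 2 - t).choose t : ℝ) * ((M + 2 - 2 * t).choose (j + 1 - t) : ℝ)
         - (-1 : ℝ) ^ t * ((M + 1 - t).choose t : ℝ) * ((M + 2 - 2 * t).choose (j + 1 - t) : ℝ))
        = - S M j := by
      rw [Finset.sum_range_succ']
      have h0 : ((-1 : ℝ) ^ 0 * ((M + 2 - 0).choose 0 : ℝ) * ((M + 2 - 2 * 0).choose (j + 1 - 0) : ℝ)
          - (-1 : ℝ) ^ 0 * ((M + 1 - 0).choose 0 : ℝ) * ((M + 2 - 2 * 0).choose (j + 1 - 0) : ℝ)) = 0 := by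
        simp
      have hu : ∀ u ∈ range (j + 1),
          ((-1 : ℝ) ^ (u+1) * ((M + 2 - (u+1)).choose (u+1) : ℝ) * ((M + 2 - 2 * (u+1)).choose (j + 1 - (u+1)) : ℝ)
           - (-1 : ℝ) ^ (u+1) * ((M + 1 - (u+1)).choose (u+1) : ℝ) * ((M + 2 - 2 * (u+1)).choose (j + 1 - (u+1)) : ℝ))
          = - ((-1 : ℝ) ^ u * ((M - u).choose u : ℝ) * ((M - 2 * u).choose (j - u) : ℝ)) := by
        intro u _
        rw [show M + 2 - (u+1) = M + 1 - u by omega, show M + 1 - (u+1) = M - u by omega,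
            show M + 2 - 2 * (u+1) = M - 2 * u by omega, show j + 1 - (u+1) = j - u by omega]
        have hp : ((M + 1 - u).choose (u + 1) : ℝ)
            = ((M - u).choose (u + 1) : ℝ) + ((M - u).choose u : ℝ) := by
          exact_mod_cast congrArg (Nat.cast (R := ℝ)) (pascal1 M u)
        rw [pow_succ, hp]
        ring
      rw [Finset.sum_congr rfl hu, h0, add_zero, S, ← Finset.sum_neg_distrib]
    have expand : ∑ t ∈ range (j + 2),
        ((-1 : ℝ) ^ t * ((M + 2 - t).choose t : ℝ) * ((M + 2 - 2 * t).choose (j + 1 - t) : ℝ)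
         - (-1 : ℝ) ^ t * ((M + 1 - t).choose t : ℝ) * ((M + 2 - 2 * t).choose (j + 1 - t) : ℝ))
        = S (M + 2) (j + 1) - ∑ t ∈ range (j + 2), (-1 : ℝ) ^ t * ((M + 1 - t).choose t : ℝ)
            * ((M + 2 - 2 * t).choose (j + 1 - t) : ℝ) := by
      rw [S, Finset.sum_sub_distrib]
    rw [expand] at key
    linarith
  have step2 : ∑ t ∈ range (j + 2), (-1 : ℝ) ^ t * ((M + 1 - t).choose t : ℝ)
          * ((M + 2 - 2 * t).choose (j + 1 - t) : ℝ) = S (M + 1) (j + 1) + S (M + 1) j := by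
    have congr1 : ∀ t ∈ range (j + 1),
        (-1 : ℝ) ^ t * ((M + 1 - t).choose t : ℝ) * ((M + 2 - 2 * t).choose (j + 1 - t) : ℝ)
        = ((-1 : ℝ) ^ t * ((M + 1 - t).choose t : ℝ) * ((M + 1 - 2 * t).choose (j + 1 - t) : ℝ)
           + (-1 : ℝ) ^ t * ((M + 1 - t).choose t : ℝ) * ((M + 1 - 2 * t).choose (j - t) : ℝ)) := by
      intro t ht
      simp only [mem_range] at ht
      have := pascal2 M t j (by omega)
      calc (-1 : ℝ) ^ t * ((M + 1 - t).choose t : ℝ) * ((M + 2 - 2 * t).choose (j + 1 - t) : ℝ)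
          = (-1 : ℝ) ^ t * (((M + 1 - t).choose t : ℝ) * ((M + 2 - 2 * t).choose (j + 1 - t) : ℝ)) := by ring
        _ = (-1 : ℝ) ^ t * (((M + 1 - t).choose t : ℝ) *
              (((M + 1 - 2 * t).choose (j + 1 - t) : ℝ) + ((M + 1 - 2 * t).choose (j - t) : ℝ))) := by rw [this]
        _ = _ := by ring
    rw [Finset.sum_range_succ, Finset.sum_congr rfl congr1, Finset.sum_add_distrib]
    rw [S, S, Finset.sum_range_succ (fun t => (-1 : ℝ) ^ t * ((M + 1 - t).choose t : ℝ)
          * ((M + 1 - 2 * t).choose (j + 1 - t) : ℝ)) (j + 1)]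
    have : ((M + 2 - 2 * (j+1)).choose (j + 1 - (j+1)) : ℝ) = ((M + 1 - 2 * (j+1)).choose (j + 1 - (j+1)) : ℝ) := by
      rw [show j + 1 - (j + 1) = 0 by omega]
      simp
    rw [this]
    ring
  rw [step1, step2]

lemma S_eq : ∀ N k, S N k = if k ≤ N then 1 else 0 := by
  intro N
  induction N using Nat.strong_induction_on with
  | _ N ih =>
    match N with
    | 0 => exact fun k => by rw [S_N0]; split_ifs <;> simp_all <;> omega
    | 1 => exact fun k => by rw [S_N1]
    | (M + 2) =>
      intro k
      rcases k with _ | j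
      · rw [S_k0, if_pos (by omega)]
      · rw [S_rec, ih (M+1) (by omega), ih (M+1) (by omega), ih M (by omega)]
        split_ifs <;> norm_num <;> omega

noncomputable def c (n m i : ℕ) : ℝ :=
  (-1 : ℝ) ^ ((n - m) / 2) *
    ∑ s ∈ Finset.Icc ((i - m) / 2) ((n - m) / 2),
      (-1 : ℝ) ^ s * (((n + m) / 2 + s).choose ((n - m) / 2 - s) : ℝ) *
        ((m + 2 * s).choose s : ℝ) * (2 : ℝ) ^ ((1 : ℤ) - m - 2 * s) *
        ((m + 2 * s).choose ((m + 2 * s - i) / 2) : ℝ)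

theorem coeff_sum_rule (n m : ℕ) (hmn : m ≤ n) (hpar : Even (n - m)) :
    (∑ i ∈ Finset.range (n + 1),
      if (n - i) % 2 = 0 then (if i = 0 then (1 : ℝ) / 2 else 1) * c n m i else 0) = 1 := by
  obtain ⟨k, hk⟩ := hpar
  have hn : n = m + 2 * k := by omega
  subst hn
  clear hk hmn
  -- abbreviations
  set n := m + 2 * k with hn
  have hc : ∀ i, c n m i = (-1 : ℝ) ^ k *
      ∑ s ∈ Finset.Icc ((i - m) / 2) k,
        (-1 : ℝ) ^ s * ((m + k + s).choose (k - s) : ℝ) *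
          ((m + 2 * s).choose s : ℝ) * (2 : ℝ) ^ ((1 : ℤ) - m - 2 * s) *
          ((m + 2 * s).choose ((m + 2 * s - i) / 2) : ℝ) := by
    intro i
    rw [c, show (n - m) / 2 = k by omega, show (n + m) / 2 = m + k by omega]
  -- the summand as a double sum
  have stepA : ∀ i ∈ range (n + 1),
      (if (n - i) % 2 = 0 then (if i = 0 then (1 : ℝ) / 2 else 1) * c n m i else 0)
      = ∑ s ∈ range (k + 1),
          (if ((n - i) % 2 = 0 ∧ (i - m) / 2 ≤ s) then
            ((-1 : ℝ) ^ k * (-1 : ℝ) ^ s * ((m + k + s).choose (k - s) : ℝ) *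
              ((m + 2 * s).choose s : ℝ) * (2 : ℝ) ^ ((1 : ℤ) - m - 2 * s)) *
            ((if i = 0 then (1 : ℝ) / 2 else 1) * ((m + 2 * s).choose ((m + 2 * s - i) / 2) : ℝ))
           else 0) := by
    intro i _
    by_cases hcond : (n - i) % 2 = 0
    · rw [if_pos hcond, hc i]
      have hIcc : Finset.Icc ((i - m) / 2) k = filter (fun s => (i - m) / 2 ≤ s) (range (k + 1)) := by
        ext s; simp only [mem_Icc, mem_filter, mem_range]; omega
      symm
      calc ∑ s ∈ range (k + 1),
          (if ((n - i) % 2 = 0 ∧ (i - m) / 2 ≤ s) then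
            ((-1 : ℝ) ^ k * (-1 : ℝ) ^ s * ((m + k + s).choose (k - s) : ℝ) *
              ((m + 2 * s).choose s : ℝ) * (2 : ℝ) ^ ((1 : ℤ) - m - 2 * s)) *
            ((if i = 0 then (1 : ℝ) / 2 else 1) * ((m + 2 * s).choose ((m + 2 * s - i) / 2) : ℝ))
           else 0)
          = ∑ s ∈ range (k + 1),
          (if ((i - m) / 2 ≤ s) then
            ((-1 : ℝ) ^ k * (-1 : ℝ) ^ s * ((m + k + s).choose (k - s) : ℝ) *
              ((m + 2 * s).choose s : ℝ) * (2 : ℝ) ^ ((1 : ℤ) - m - 2 * s)) *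
            ((if i = 0 then (1 : ℝ) / 2 else 1) * ((m + 2 * s).choose ((m + 2 * s - i) / 2) : ℝ))
           else 0) := by
            apply Finset.sum_congr rfl; intro s _; simp [hcond]
        _ = ∑ s ∈ filter (fun s => (i - m) / 2 ≤ s) (range (k + 1)),
            ((-1 : ℝ) ^ k * (-1 : ℝ) ^ s * ((m + k + s).choose (k - s) : ℝ) *
              ((m + 2 * s).choose s : ℝ) * (2 : ℝ) ^ ((1 : ℤ) - m - 2 * s)) *
            ((if i = 0 then (1 : ℝ) / 2 else 1) * ((m + 2 * s).choose ((m + 2 * s - i) / 2) : ℝ)) :=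
            (Finset.sum_filter _ _).symm
        _ = _ := by
            rw [← hIcc, Finset.mul_sum, Finset.mul_sum]
            apply Finset.sum_congr rfl; intro s _; ring
    · rw [if_neg hcond]
      exact (Finset.sum_eq_zero (fun s _ => by rw [if_neg (by tauto)])).symm
  rw [Finset.sum_congr rfl stepA, Finset.sum_comm]
  have stepC : ∀ s ∈ range (k + 1),
      (∑ i ∈ range (n + 1),
        (if ((n - i) % 2 = 0 ∧ (i - m) / 2 ≤ s) then
            ((-1 : ℝ) ^ k * (-1 : ℝ) ^ s * ((m + k + s).choose (k - s) : ℝ) *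
              ((m + 2 * s).choose s : ℝ) * (2 : ℝ) ^ ((1 : ℤ) - m - 2 * s)) *
            ((if i = 0 then (1 : ℝ) / 2 else 1) * ((m + 2 * s).choose ((m + 2 * s - i) / 2) : ℝ))
           else 0))
      = (-1 : ℝ) ^ k * (-1 : ℝ) ^ s * ((m + k + s).choose (k - s) : ℝ) *
          ((m + 2 * s).choose s : ℝ) := by
    intro s hs
    simp only [mem_range] at hs
    set M := m + 2 * s with hM
    set K := (-1 : ℝ) ^ k * (-1 : ℝ) ^ s * ((m + k + s).choose (k - s) : ℝ) *
              ((m + 2 * s).choose s : ℝ) * (2 : ℝ) ^ ((1 : ℤ) - m - 2 * s) with hK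
    have c1 : ∀ i ∈ range (n + 1),
        (if ((n - i) % 2 = 0 ∧ (i - m) / 2 ≤ s) then
            K * ((if i = 0 then (1 : ℝ) / 2 else 1) * ((M).choose ((M - i) / 2) : ℝ)) else 0)
        = K * (if (i ≤ M ∧ (M - i) % 2 = 0) then
            ((if i = 0 then (1 : ℝ) / 2 else 1) * ((M).choose ((M - i) / 2) : ℝ)) else 0) := by
      intro i hi
      simp only [mem_range] at hi
      have hiff : ((n - i) % 2 = 0 ∧ (i - m) / 2 ≤ s) ↔ (i ≤ M ∧ (M - i) % 2 = 0) := by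
        rw [hM, hn]; omega
      rw [if_congr hiff rfl rfl]
      split_ifs <;> ring
    rw [Finset.sum_congr rfl c1, ← Finset.mul_sum]
    have c2 : ∑ i ∈ range (n + 1),
        (if (i ≤ M ∧ (M - i) % 2 = 0) then
            ((if i = 0 then (1 : ℝ) / 2 else 1) * ((M).choose ((M - i) / 2) : ℝ)) else 0)
        = ∑ i ∈ range (M + 1),
        (if (i ≤ M ∧ (M - i) % 2 = 0) then
            ((if i = 0 then (1 : ℝ) / 2 else 1) * ((M).choose ((M - i) / 2) : ℝ)) else 0) := by
      symm
      apply Finset.sum_subset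
      · apply Finset.range_subset_range.mpr; omega
      · intro i _ hnotin
        simp only [mem_range] at hnotin
        rw [if_neg (by omega)]
    rw [c2]
    have c3 : ∑ i ∈ range (M + 1),
        (if (i ≤ M ∧ (M - i) % 2 = 0) then
            ((if i = 0 then (1 : ℝ) / 2 else 1) * ((M).choose ((M - i) / 2) : ℝ)) else 0)
        = ∑ i ∈ range (M + 1),
        (if ((M - i) % 2 = 0) then
            ((if i = 0 then (1 : ℝ) / 2 else 1) * ((M).choose ((M - i) / 2) : ℝ)) else 0) := by
      apply Finset.sum_congr rfl
      intro i hi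
      simp only [mem_range] at hi
      have : (i ≤ M ∧ (M - i) % 2 = 0) ↔ ((M - i) % 2 = 0) := by
        constructor
        · tauto
        · intro h; exact ⟨by omega, h⟩
      rw [if_congr this rfl rfl]
    rw [c3, J_lemma M, hK]
    have hpow : (2 : ℝ) ^ ((1 : ℤ) - m - 2 * s) * ((2 : ℝ) ^ M / 2) = 1 := by
      have h2 : (2 : ℝ) ≠ 0 := by norm_num
      rw [div_eq_mul_inv, ← zpow_neg_one, ← zpow_natCast (2 : ℝ) M,
          ← zpow_add₀ h2, ← zpow_add₀ h2]
      rw [show (1 : ℤ) - m - 2 * s + ((M : ℤ) + -1) = 0 by rw [hM]; push_cast; ring]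
      exact zpow_zero 2
    calc (-1 : ℝ) ^ k * (-1 : ℝ) ^ s * ((m + k + s).choose (k - s) : ℝ) *
          ((m + 2 * s).choose s : ℝ) * (2 : ℝ) ^ ((1 : ℤ) - m - 2 * s) * ((2 : ℝ) ^ M / 2)
        = (-1 : ℝ) ^ k * (-1 : ℝ) ^ s * ((m + k + s).choose (k - s) : ℝ) *
          ((m + 2 * s).choose s : ℝ) * ((2 : ℝ) ^ ((1 : ℤ) - m - 2 * s) * ((2 : ℝ) ^ M / 2)) := by ring
      _ = _ := by rw [hpow, mul_one]
  rw [Finset.sum_congr rfl stepC]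
  have reflect : ∑ s ∈ range (k + 1),
      (-1 : ℝ) ^ k * (-1 : ℝ) ^ s * ((m + k + s).choose (k - s) : ℝ) *
          ((m + 2 * s).choose s : ℝ) = S (m + 2 * k) k := by
    rw [S, ← Finset.sum_range_reflect (fun t => (-1 : ℝ) ^ t * ((m + 2 * k - t).choose t : ℝ)
        * ((m + 2 * k - 2 * t).choose (k - t) : ℝ)) (k + 1)]
    apply Finset.sum_congr rfl
    intro s hs
    simp only [mem_range] at hs
    rw [show k + 1 - 1 - s = k - s by omega, show m + 2 * k - (k - s) = m + k + s by omega,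
        show m + 2 * k - 2 * (k - s) = m + 2 * s by omega, show k - (k - s) = s by omega]
    have h1 : (-1 : ℝ) ^ k = (-1 : ℝ) ^ (k - s) * (-1 : ℝ) ^ s := by
      rw [← pow_add]; congr 1; omega
    have h2 : (-1 : ℝ) ^ s * (-1 : ℝ) ^ s = 1 := by
      rcases Nat.even_or_odd s with h | h
      · simp [h.neg_one_pow]
      · simp [h.neg_one_pow]
    rw [h1]
    linear_combination ((-1 : ℝ) ^ (k - s) * ((m + k + s).choose (k - s) : ℝ) *
      ((m + 2 * s).choose s : ℝ)) * h2
  rw [reflect, S_eq, if_pos (by omega)]
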